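/- Let β : ℝ → ℝ satisfy hypothesis (H_β) and let m > 0. The function g(v) = ψ'(ψ⁻¹(v)) − 1, defined for all v ∈ ℝ, is a nonnegative even function with g(0) = 0; it is nonincreasing on (−∞, 0], nondecreasing on [0, ∞), and convex on ℝ. -/

import Mathlib

open MeasureTheory Filter Set

/-- The integro-exponential change of variables `ψ(u) = ∫₀ᵘ exp(m ∫₀ˢ β(t) dt) ds`. -/
noncomputable def psi (β : ℝ → ℝ) (m : ℝ) (u : ℝ) : ℝ :=
  ∫ s in (0:ℝ)..u, Real.exp (m * ∫ t in (0:ℝ)..s, β t)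

/-- Its derivative `ψ'(u) = exp(m ∫₀ᵘ β(t) dt)`. -/
noncomputable def psi' (β : ℝ → ℝ) (m : ℝ) (u : ℝ) : ℝ :=
  Real.exp (m * ∫ t in (0:ℝ)..u, β t)

/-- The inverse function `ψ⁻¹` of `ψ`. -/
noncomputable def psiInv (β : ℝ → ℝ) (m : ℝ) : ℝ → ℝ :=
  Function.invFun (psi β m)

/-- The function `g(v) = ψ'(ψ⁻¹(v)) − 1`. -/
noncomputable def gFun (β : ℝ → ℝ) (m : ℝ) (v : ℝ) : ℝ :=
  psi' β m (psiInv β m v) - 1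

theorem stmt3 (β : ℝ → ℝ) (m : ℝ) (hm : 0 < m)
    (hodd : ∀ s, β (-s) = -β s)
    (hlip : LocallyLipschitz β)
    (hmono : Monotone β)
    (hsign : ∀ s, 0 ≤ β s * s)
    (htop : Tendsto β atTop atTop) :
    (∀ v, 0 ≤ gFun β m v) ∧
    (∀ v, gFun β m (-v) = gFun β m v) ∧
    gFun β m 0 = 0 ∧
    AntitoneOn (gFun β m) (Iic 0) ∧
    MonotoneOn (gFun β m) (Ici 0) ∧
    ConvexOn ℝ univ (gFun β m) := by
  have hβc : Continuous β := hlip.continuous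
  have hβ0 : β 0 = 0 := by have := hodd 0; simp at this; linarith
  have hβnn : ∀ s, 0 ≤ s → 0 ≤ β s := by
    intro s hs
    rcases eq_or_lt_of_le hs with h | h
    · rw [← h, hβ0]
    · nlinarith [hsign s]
  set B : ℝ → ℝ := fun u => ∫ t in (0:ℝ)..u, β t with hBdef
  have hBderiv : ∀ u, HasDerivAt B (β u) u := fun u =>
    intervalIntegral.integral_hasDerivAt_right (hβc.intervalIntegrable _ _)
      (hβc.stronglyMeasurableAtFilter _ _) hβc.continuousAt
  have hBc : Continuous B :=
    continuous_iff_continuousAt.mpr fun u => (hBderiv u).continuousAt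
  have hBeven : ∀ u, B (-u) = B u := by
    intro u
    have h1 : ∫ x in (0:ℝ)..u, β (-x) = ∫ x in (-u)..(-0:ℝ), β x :=
      intervalIntegral.integral_comp_neg β
    simp only [hodd, neg_zero, intervalIntegral.integral_neg] at h1
    have h2 : ∫ x in (-u)..(0:ℝ), β x = -∫ x in (0:ℝ)..(-u), β x :=
      intervalIntegral.integral_symm _ _
    simp only [hBdef]
    rw [h2] at h1
    linarith
  have hBnn : ∀ u, 0 ≤ B u := by
    have key : ∀ u, 0 ≤ u → 0 ≤ B u := fun u hu =>
      intervalIntegral.integral_nonneg hu fun x hx => hβnn x hx.1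
    intro u
    rcases le_total 0 u with h | h
    · exact key u h
    · rw [← hBeven]; exact key _ (by linarith)
  have hBmonoOn : ∀ a b, 0 ≤ a → a ≤ b → B a ≤ B b := by
    intro a b ha hab
    have hsplit : B a + ∫ t in a..b, β t = B b :=
      intervalIntegral.integral_add_adjacent_intervals
        (hβc.intervalIntegrable _ _) (hβc.intervalIntegrable _ _)
    have : 0 ≤ ∫ t in a..b, β t :=
      intervalIntegral.integral_nonneg hab fun x hx => hβnn x (le_trans ha hx.1)
    linarith
  -- properties of ψ'
  have hψ'eq : ∀ u, psi' β m u = Real.exp (m * B u) := fun u => rfl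
  have hψ'pos : ∀ u, 0 < psi' β m u := fun u => Real.exp_pos _
  have hψ'ge1 : ∀ u, 1 ≤ psi' β m u := fun u =>
    Real.one_le_exp (mul_nonneg hm.le (hBnn u))
  have hψ'c : Continuous (psi' β m) := Real.continuous_exp.comp (continuous_const.mul hBc)
  have hψ'even : ∀ u, psi' β m (-u) = psi' β m u := by
    intro u; rw [hψ'eq, hψ'eq, hBeven]
  -- ψ
  have hψderiv : ∀ u, HasDerivAt (psi β m) (psi' β m u) u := fun u =>
    intervalIntegral.integral_hasDerivAt_right (hψ'c.intervalIntegrable _ _)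
      (hψ'c.stronglyMeasurableAtFilter _ _) hψ'c.continuousAt
  have hψc : Continuous (psi β m) :=
    continuous_iff_continuousAt.mpr fun u => (hψderiv u).continuousAt
  have hψmono : StrictMono (psi β m) :=
    strictMono_of_hasDerivAt_pos hψderiv hψ'pos
  have hψ0 : psi β m 0 = 0 := intervalIntegral.integral_same
  have hψodd : ∀ u, psi β m (-u) = -psi β m u := by
    intro u
    have h1 : ∫ x in (0:ℝ)..u, psi' β m (-x) = ∫ x in (-u)..(-0:ℝ), psi' β m x :=
      intervalIntegral.integral_comp_neg (psi' β m)
    simp only [hψ'even, neg_zero] at h1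
    have h2 : ∫ x in (-u)..(0:ℝ), psi' β m x = -∫ x in (0:ℝ)..(-u), psi' β m x :=
      intervalIntegral.integral_symm _ _
    rw [h2] at h1
    show (∫ x in (0:ℝ)..(-u), psi' β m x) = -∫ x in (0:ℝ)..u, psi' β m x
    linarith
  have hψge : ∀ u, 0 ≤ u → u ≤ psi β m u := by
    intro u hu
    have : ∫ x in (0:ℝ)..u, (1:ℝ) ≤ ∫ x in (0:ℝ)..u, psi' β m x :=
      intervalIntegral.integral_mono_on hu (intervalIntegrable_const)
        (hψ'c.intervalIntegrable _ _) fun x _ => hψ'ge1 x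
    simp at this; exact this
  have hψsurj : Function.Surjective (psi β m) := by
    intro y
    have hb : y ≤ psi β m |y| := le_trans (le_abs_self y) (hψge _ (abs_nonneg y))
    have ha : psi β m (-|y|) ≤ y := by
      rw [hψodd]
      have := neg_abs_le y
      linarith [hψge |y| (abs_nonneg y), le_abs_self y, neg_abs_le y]
    have hmem : y ∈ Icc (psi β m (-|y|)) (psi β m |y|) := ⟨ha, hb⟩
    have := intermediate_value_Icc (by linarith [abs_nonneg y] : -|y| ≤ |y|) hψc.continuousOn
    obtain ⟨x, _, hx⟩ := this hmem
    exact ⟨x, hx⟩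
  have hinj := hψmono.injective
  have hri : ∀ v, psi β m (psiInv β m v) = v := fun v =>
    Function.rightInverse_invFun hψsurj v
  have hli : ∀ u, psiInv β m (psi β m u) = u := fun u =>
    Function.leftInverse_invFun hinj u
  have hinvmono : Monotone (psiInv β m) := by
    intro a b hab
    rw [← hψmono.le_iff_le, hri, hri]
    exact hab
  have hinv0 : psiInv β m 0 = 0 := by
    have := hli 0
    rwa [hψ0] at this
  have hinvodd : ∀ v, psiInv β m (-v) = -psiInv β m v := by
    intro v
    have : psi β m (-psiInv β m v) = -v := by rw [hψodd, hri]
    rw [← this, hli]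
  -- continuity of psiInv
  have hinvcont : Continuous (psiInv β m) := by
    let e := StrictMono.orderIsoOfSurjective (psi β m) hψmono hψsurj
    have hc : (e : ℝ → ℝ) = psi β m := StrictMono.coe_orderIsoOfSurjective _ _ _
    have heq : ∀ v, psiInv β m v = e.symm v := by
      intro v
      have h : psi β m (e.symm v) = v := by rw [← hc]; exact e.apply_symm_apply v
      conv_lhs => rw [← h]
      exact hli _
    have : Continuous (e.symm : ℝ → ℝ) := e.symm.toHomeomorph.continuous
    exact this.congr fun v => (heq v).symm
  -- basic facts about g
  have hg_eq : ∀ v, gFun β m v = Real.exp (m * B (psiInv β m v)) - 1 := fun v => rfl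
  have hg_nonneg : ∀ v, 0 ≤ gFun β m v := by
    intro v
    rw [hg_eq]
    have := Real.one_le_exp (mul_nonneg hm.le (hBnn (psiInv β m v)))
    linarith
  have hg_even : ∀ v, gFun β m (-v) = gFun β m v := by
    intro v
    rw [hg_eq, hg_eq, hinvodd, hBeven]
  have hg_zero : gFun β m 0 = 0 := by
    rw [hg_eq, hinv0]
    simp [hBdef]
  have hg_mono : MonotoneOn (gFun β m) (Ici 0) := by
    intro a ha b hb hab
    rw [hg_eq, hg_eq]
    have h0a : 0 ≤ psiInv β m a := by rw [← hinv0]; exact hinvmono ha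
    have hBle : B (psiInv β m a) ≤ B (psiInv β m b) :=
      hBmonoOn _ _ h0a (hinvmono hab)
    have := Real.exp_le_exp.mpr (mul_le_mul_of_nonneg_left hBle hm.le)
    linarith
  have hg_anti : AntitoneOn (gFun β m) (Iic 0) := by
    intro a ha b hb hab
    rw [← hg_even a, ← hg_even b]
    exact hg_mono (by simpa using hb) (by simpa using ha) (by linarith)
  refine ⟨hg_nonneg, hg_even, hg_zero, hg_anti, hg_mono, ?_⟩
  -- convexity
  have hgderiv : ∀ v, HasDerivAt (gFun β m) (m * β (psiInv β m v)) v := by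
    intro v
    have hinvderiv : HasDerivAt (psiInv β m) (psi' β m (psiInv β m v))⁻¹ v := by
      apply HasDerivAt.of_local_left_inverse hinvcont.continuousAt
        (hψderiv (psiInv β m v)) (ne_of_gt (hψ'pos _))
      exact Filter.Eventually.of_forall hri
    have houter : HasDerivAt (fun u => Real.exp (m * B u) - 1)
        (Real.exp (m * B (psiInv β m v)) * (m * β (psiInv β m v))) (psiInv β m v) :=
      (((hBderiv (psiInv β m v)).const_mul m).exp).sub_const 1
    have hcomp := houter.comp v hinvderiv
    have hfun : (fun u => Real.exp (m * B u) - 1) ∘ psiInv β m = gFun β m := rfl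
    rw [hfun] at hcomp
    refine hcomp.congr_deriv ?_
    have hne : psi' β m (psiInv β m v) ≠ 0 := ne_of_gt (hψ'pos _)
    rw [hψ'eq] at hne ⊢
    field_simp
  have hderiveq : ∀ v, deriv (gFun β m) v = m * β (psiInv β m v) := fun v =>
    (hgderiv v).deriv
  have hdiff : ∀ v, DifferentiableAt ℝ (gFun β m) v := fun v => (hgderiv v).differentiableAt
  have hderivmono : MonotoneOn (deriv (gFun β m)) (interior (univ : Set ℝ)) := by
    intro a _ b _ hab
    rw [hderiveq, hderiveq]
    exact mul_le_mul_of_nonneg_left (hmono (hinvmono hab)) hm.le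
  exact MonotoneOn.convexOn_of_deriv convex_univ
    (fun v _ => (hdiff v).continuousAt.continuousWithinAt)
    (fun v _ => (hdiff v).differentiableWithinAt) hderivmono
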